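/- arXiv:1805.11316 — 2 statements merged into one kernel-verified Lean document; each statement's English description precedes it below -/
import Mathlib

section
/- Suppose each scale function α_n is constantly equal to Λ or to −Λ on I, with Λ ≠ 0. Then ‖b‖_p ≤ ((1+Λ)/Λ) ‖0 *_T b‖_p for every b ∈ L^p(I) (1 ≤ p ≤ ∞), and consequently the linear operator P⁰₁ : L^p(I) → L^p(I), P⁰₁(b) = 0 *_T b, has closed range in L^p(I). -/
open MeasureTheory ENNReal

noncomputable section

/-- The inverse of the increasing affine map `L n` sending `[x 0, x N]` onto
`[x n, x (n+1)]` (so `L n (x 0) = x n.castSucc` and `L n (x N) = x n.succ`). -/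
def Linv {N : ℕ} (x : Fin (N + 1) → ℝ) (n : Fin N) (y : ℝ) : ℝ :=
  x 0 + (y - x n.castSucc) * (x (Fin.last N) - x 0) / (x n.succ - x n.castSucc)

/-- The subinterval `I n` of the partition: `[x 0, x 1]` for `n = 0` and
`(x n, x (n+1)]` otherwise. -/
def subInt {N : ℕ} (x : Fin (N + 1) → ℝ) (n : Fin N) : Set ℝ :=
  if n.val = 0 then Set.Icc (x n.castSucc) (x n.succ)
  else Set.Ioc (x n.castSucc) (x n.succ)

/-- `h` is the image of `g` under the Read–Bajraktarević operator `T_{f,b}` with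
scale functions `α`, almost everywhere: on each `I n`,
`h = f + (α n ∘ Lₙ⁻¹) · ((g - b) ∘ Lₙ⁻¹)`. -/
def RBEq {N : ℕ} (μ : Measure ℝ) (x : Fin (N + 1) → ℝ) (α : Fin N → ℝ → ℝ)
    (f b g h : ℝ → ℝ) : Prop :=
  ∀ n : Fin N, ∀ᵐ t ∂μ, t ∈ subInt x n →
    h t = f t + α n (Linv x n t) * (g (Linv x n t) - b (Linv x n t))

/-- `h` satisfies the self-referential equation of `T_{f,b}`, i.e. `h` is a fixed
point of `T_{f,b}`; `h` is then the fractal convolution `f *_T b`. -/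
def SelfRef {N : ℕ} (μ : Measure ℝ) (x : Fin (N + 1) → ℝ) (α : Fin N → ℝ → ℝ)
    (f b h : ℝ → ℝ) : Prop :=
  RBEq μ x α f b h h

namespace FCAux

variable {N : ℕ} {x : Fin (N + 1) → ℝ}

/-- slope of `Linv`. -/
def q (x : Fin (N + 1) → ℝ) (n : Fin N) : ℝ :=
  (x (Fin.last N) - x 0) / (x n.succ - x n.castSucc)

lemma huv (hx : StrictMono x) (n : Fin N) : x n.castSucc < x n.succ :=
  hx Fin.castSucc_lt_succ

lemma hcd (hx : StrictMono x) (hN : 0 < N) : x 0 < x (Fin.last N) :=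
  hx (by simp [Fin.lt_def, Fin.last]; omega)

lemma q_pos (hx : StrictMono x) (hN : 0 < N) (n : Fin N) : 0 < q x n :=
  div_pos (sub_pos.2 (hcd hx hN)) (sub_pos.2 (huv hx n))

lemma Linv_eq (n : Fin N) (t : ℝ) :
    Linv x n t = (x 0 - x n.castSucc * q x n) + q x n * t := by
  unfold Linv q; ring

lemma Linv_left (hx : StrictMono x) (n : Fin N) : Linv x n (x n.castSucc) = x 0 := by
  unfold Linv; simp

lemma Linv_right (hx : StrictMono x) (n : Fin N) : Linv x n (x n.succ) = x (Fin.last N) := by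
  have h0 : x n.succ - x n.castSucc ≠ 0 := sub_ne_zero.2 (huv hx n).ne'
  unfold Linv
  field_simp
  ring

lemma Linv_le_Linv (hx : StrictMono x) (hN : 0 < N) (n : Fin N) {s t : ℝ} :
    Linv x n s ≤ Linv x n t ↔ s ≤ t := by
  rw [Linv_eq, Linv_eq, add_le_add_iff_left]
  exact mul_le_mul_iff_right₀ (q_pos hx hN n)

lemma Linv_lt_Linv (hx : StrictMono x) (hN : 0 < N) (n : Fin N) {s t : ℝ} :
    Linv x n s < Linv x n t ↔ s < t := by
  rw [Linv_eq, Linv_eq, add_lt_add_iff_left]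
  exact mul_lt_mul_iff_right₀ (q_pos hx hN n)

lemma measurable_Linv (n : Fin N) : Measurable (Linv x n) := by
  unfold Linv; fun_prop

lemma measurableSet_subInt (n : Fin N) : MeasurableSet (subInt x n) := by
  unfold subInt; split_ifs
  exacts [measurableSet_Icc, measurableSet_Ioc]

lemma subInt_subset_Icc (n : Fin N) : subInt x n ⊆ Set.Icc (x n.castSucc) (x n.succ) := by
  unfold subInt; split_ifs
  exacts [subset_rfl, Set.Ioc_subset_Icc_self]

lemma Ioc_subset_subInt (n : Fin N) : Set.Ioc (x n.castSucc) (x n.succ) ⊆ subInt x n := by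
  unfold subInt; split_ifs
  exacts [Set.Ioc_subset_Icc_self, subset_rfl]

lemma Linv_mem_Icc (hx : StrictMono x) (n : Fin N) {t : ℝ}
    (ht : t ∈ subInt x n) : Linv x n t ∈ Set.Icc (x 0) (x (Fin.last N)) := by
  have hN : 0 < N := n.pos
  obtain ⟨h1, h2⟩ := subInt_subset_Icc n ht
  constructor
  · rw [← Linv_left hx n]; exact (Linv_le_Linv hx hN n).2 h1
  · rw [← Linv_right hx n]; exact (Linv_le_Linv hx hN n).2 h2

lemma subInt_disjoint (hx : StrictMono x) :
    Pairwise (Function.onFun Disjoint (subInt x)) := by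
  have key : ∀ n m : Fin N, n < m → Disjoint (subInt x n) (subInt x m) := by
    intro n m hnm
    have h1 : subInt x n ⊆ Set.Iic (x n.succ) :=
      (subInt_subset_Icc n).trans Set.Icc_subset_Iic_self
    have hlt : (n : ℕ) < (m : ℕ) := Fin.lt_def.mp hnm
    have hm0 : m.val ≠ 0 := by omega
    have h2 : subInt x m ⊆ Set.Ioi (x m.castSucc) := by
      unfold subInt; rw [if_neg hm0]; exact Set.Ioc_subset_Ioi_self
    have hle : x n.succ ≤ x m.castSucc := by
      apply hx.monotone
      rw [Fin.le_def, Fin.val_succ, Fin.coe_castSucc]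
      omega
    exact Set.disjoint_of_subset h1 h2 (Set.Iic_disjoint_Ioi hle)
  intro n m hnm
  rcases lt_or_gt_of_ne hnm with h | h
  · exact key n m h
  · exact (key m n h).symm

lemma exists_mem_subInt (hx : StrictMono x) (hN : 0 < N) {t : ℝ}
    (ht : t ∈ Set.Icc (x 0) (x (Fin.last N))) : ∃ n : Fin N, t ∈ subInt x n := by
  obtain ⟨ht0, ht1⟩ := ht
  have : ∀ m : Fin (N + 1), t ≤ x m → ∃ n : Fin N, t ∈ subInt x n := by
    intro m
    induction m using Fin.induction with
    | zero =>
      intro hm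
      refine ⟨⟨0, hN⟩, ?_⟩
      unfold subInt
      rw [if_pos rfl]
      have hc : (⟨0, hN⟩ : Fin N).castSucc = 0 := rfl
      refine ⟨by rw [hc]; exact ht0, ?_⟩
      rw [hc] at *
      exact le_trans hm (hx.monotone (Fin.zero_le _))
    | succ i ih =>
      intro hm
      by_cases hle : t ≤ x i.castSucc
      · exact ih hle
      · exact ⟨i, Ioc_subset_subInt i ⟨not_le.1 hle, hm⟩⟩
  exact this (Fin.last N) ht1

lemma iUnion_subInt (hx : StrictMono x) (hN : 0 < N) :
    ⋃ n : Fin N, subInt x n = Set.Icc (x 0) (x (Fin.last N)) := by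
  apply Set.Subset.antisymm
  · refine Set.iUnion_subset fun n => (subInt_subset_Icc n).trans ?_
    exact Set.Icc_subset_Icc (hx.monotone (Fin.zero_le _)) (hx.monotone (Fin.le_last _))
  · intro t ht
    obtain ⟨n, hn⟩ := exists_mem_subInt hx hN ht
    exact Set.mem_iUnion.2 ⟨n, hn⟩


/-- The piecewise map `Φ` equal to `Linv x n` on `subInt x n`. -/
def Phi (x : Fin (N + 1) → ℝ) : ℝ → ℝ :=
  fun t => ∑ n : Fin N, (subInt x n).indicator (Linv x n) t

lemma measurable_Phi : Measurable (Phi x) := by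
  apply Finset.measurable_sum
  intro n _
  exact (measurable_Linv n).indicator (measurableSet_subInt n)

/-- Generic evaluation of a piecewise sum of indicators on `subInt x n`. -/
lemma indicator_sum_eq (hx : StrictMono x) (F : Fin N → ℝ → ℝ) {n : Fin N} {t : ℝ}
    (ht : t ∈ subInt x n) :
    ∑ m : Fin N, (subInt x m).indicator (F m) t = F n t := by
  rw [Finset.sum_eq_single n]
  · exact Set.indicator_of_mem ht _
  · intro m _ hmn
    apply Set.indicator_of_notMem
    intro htm
    exact (subInt_disjoint hx hmn).ne_of_mem htm ht rfl
  · intro h; exact absurd (Finset.mem_univ n) h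

lemma Phi_eq (hx : StrictMono x) {n : Fin N} {t : ℝ} (ht : t ∈ subInt x n) :
    Phi x t = Linv x n t :=
  indicator_sum_eq hx _ ht

/-- Volume of preimages under `Linv`, valid for arbitrary sets. -/
lemma volume_preimage_Linv (hx : StrictMono x) (hN : 0 < N) (n : Fin N) (S : Set ℝ) :
    volume (Linv x n ⁻¹' S)
      = ENNReal.ofReal ((x n.succ - x n.castSucc) / (x (Fin.last N) - x 0)) * volume S := by
  have hq := q_pos hx hN n
  have h1 : Linv x n = (fun t => (x 0 - x n.castSucc * q x n) + t) ∘ (fun t => q x n * t) := by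
    funext t
    simp only [Linv_eq, Function.comp] <;> ring
  rw [h1, Set.preimage_comp, Real.volume_preimage_mul_left hq.ne']
  have h2 : volume ((fun t => (x 0 - x n.castSucc * q x n) + t) ⁻¹' S) = volume S :=
    measure_preimage_add volume _ S
  rw [h2]
  congr 1
  rw [abs_of_pos (inv_pos.2 hq)]
  unfold q
  rw [inv_div]

lemma subInt_eq_preimage (hx : StrictMono x) (hN : 0 < N) (n : Fin N) :
    subInt x n = Linv x n ⁻¹'
      (if n.val = 0 then Set.Icc (x 0) (x (Fin.last N)) else Set.Ioc (x 0) (x (Fin.last N))) := by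
  ext t
  unfold subInt
  split_ifs with h
  · simp only [Set.mem_preimage, Set.mem_Icc]
    rw [← Linv_left hx n, ← Linv_right hx n, Linv_le_Linv hx hN, Linv_le_Linv hx hN]
  · simp only [Set.mem_preimage, Set.mem_Ioc]
    rw [← Linv_left hx n, ← Linv_right hx n, Linv_lt_Linv hx hN, Linv_le_Linv hx hN]

lemma volume_inter_Ioc (c d : ℝ) (S : Set ℝ) :
    volume (S ∩ Set.Ioc c d) = volume (S ∩ Set.Icc c d) := by
  apply le_antisymm
  · exact measure_mono (Set.inter_subset_inter_right _ Set.Ioc_subset_Icc_self)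
  · calc volume (S ∩ Set.Icc c d) ≤ volume ((S ∩ Set.Ioc c d) ∪ {c}) := by
          apply measure_mono
          intro t ⟨htS, h1, h2⟩
          rcases eq_or_lt_of_le h1 with h | h
          · exact Or.inr (by simp [← h])
          · exact Or.inl ⟨htS, h, h2⟩
      _ ≤ volume (S ∩ Set.Ioc c d) + volume ({c} : Set ℝ) := measure_union_le _ _
      _ = volume (S ∩ Set.Ioc c d) := by simp

lemma sum_lengths :
    ∑ n : Fin N, (x n.succ - x n.castSucc) = x (Fin.last N) - x 0 := by
  set f : ℕ → ℝ := fun i => x ⟨min i N, Nat.lt_succ_of_le (min_le_right i N)⟩ with hf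
  have h1 : ∀ n : Fin N, x n.succ - x n.castSucc = f (n.val + 1) - f n.val := by
    intro n
    have hn := n.isLt
    have e1 : (⟨min (n.val + 1) N, Nat.lt_succ_of_le (min_le_right _ N)⟩ : Fin (N+1)) = n.succ :=
      Fin.ext (by simp [Fin.val_succ] <;> omega)
    have e2 : (⟨min n.val N, Nat.lt_succ_of_le (min_le_right _ N)⟩ : Fin (N+1)) = n.castSucc :=
      Fin.ext (by simp <;> omega)
    simp only [hf, e1, e2]
  rw [Finset.sum_congr rfl (fun n _ => h1 n),
    Fin.sum_univ_eq_sum_range (fun i => f (i + 1) - f i) N,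
    Finset.sum_range_sub f]
  have e3 : (⟨min N N, Nat.lt_succ_of_le (min_le_right N N)⟩ : Fin (N+1)) = Fin.last N :=
    Fin.ext (by simp)
  have e4 : (⟨min 0 N, Nat.lt_succ_of_le (min_le_right 0 N)⟩ : Fin (N+1)) = 0 :=
    Fin.ext (by simp)
  simp only [hf, e3, e4]


lemma measurePreserving_Phi (hx : StrictMono x) (hN : 0 < N) :
    MeasurePreserving (Phi x)
      (volume.restrict (Set.Icc (x 0) (x (Fin.last N))))
      (volume.restrict (Set.Icc (x 0) (x (Fin.last N)))) := by
  set μ := volume.restrict (Set.Icc (x 0) (x (Fin.last N))) with hμ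
  refine ⟨measurable_Phi, ?_⟩
  apply Measure.ext
  intro S hS
  rw [Measure.map_apply measurable_Phi hS, hμ,
    Measure.restrict_apply' measurableSet_Icc, Measure.restrict_apply' measurableSet_Icc]
  have hcover : Phi x ⁻¹' S ∩ Set.Icc (x 0) (x (Fin.last N))
      = ⋃ n : Fin N, (Phi x ⁻¹' S ∩ subInt x n) := by
    rw [← Set.inter_iUnion, iUnion_subInt hx hN]
  have hpiece : ∀ n : Fin N, Phi x ⁻¹' S ∩ subInt x n
      = Linv x n ⁻¹' ((if n.val = 0 then S ∩ Set.Icc (x 0) (x (Fin.last N))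
          else S ∩ Set.Ioc (x 0) (x (Fin.last N)))) := by
    intro n
    ext t
    constructor
    · rintro ⟨htS, htn⟩
      have := Phi_eq hx htn
      have hmem := (subInt_eq_preimage hx hN n) ▸ htn
      simp only [Set.mem_preimage] at hmem ⊢
      split_ifs with h
      · rw [if_pos h] at hmem
        exact ⟨by rwa [← this], hmem⟩
      · rw [if_neg h] at hmem
        exact ⟨by rwa [← this], hmem⟩
    · intro ht
      simp only [Set.mem_preimage] at ht
      have htn : t ∈ subInt x n := by
        rw [subInt_eq_preimage hx hN n]
        simp only [Set.mem_preimage]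
        split_ifs at ht ⊢ with h
        · exact ht.2
        · exact ht.2
      refine ⟨?_, htn⟩
      simp only [Set.mem_preimage]
      rw [Phi_eq hx htn]
      split_ifs at ht with h
      · exact ht.1
      · exact ht.1
  rw [hcover, measure_iUnion ?_ ?_]
  rotate_left
  · intro n m hnm
    exact Set.disjoint_of_subset Set.inter_subset_right Set.inter_subset_right
      (subInt_disjoint hx hnm)
  · intro n
    exact (measurable_Phi hS).inter (measurableSet_subInt n)
  have hterm : ∀ n : Fin N, volume (Phi x ⁻¹' S ∩ subInt x n)
      = ENNReal.ofReal ((x n.succ - x n.castSucc) / (x (Fin.last N) - x 0))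
        * volume (S ∩ Set.Icc (x 0) (x (Fin.last N))) := by
    intro n
    rw [hpiece n]
    split_ifs with h
    · rw [volume_preimage_Linv hx hN]
    · rw [volume_preimage_Linv hx hN, volume_inter_Ioc]
  rw [tsum_fintype]
  simp only [hterm]
  rw [← Finset.sum_mul, ← ENNReal.ofReal_sum_of_nonneg]
  · rw [← Finset.sum_div, sum_lengths,
      div_self (sub_pos.2 (hcd hx hN)).ne', ENNReal.ofReal_one, one_mul]
  · intro n _
    exact div_nonneg (sub_pos.2 (huv hx n)).le (sub_pos.2 (hcd hx hN)).le


lemma ae_pullback (hx : StrictMono x) (n : Fin N) {μ : Measure ℝ}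
    (hμ : μ = volume.restrict (Set.Icc (x 0) (x (Fin.last N)))) {Z : Set ℝ}
    (hZ : μ Z = 0) :
    ∀ᵐ t ∂μ, t ∈ subInt x n → Linv x n t ∉ Z := by
  subst hμ
  have hN : 0 < N := n.pos
  rw [Measure.restrict_apply' measurableSet_Icc] at hZ
  set W := toMeasurable volume (Z ∩ Set.Icc (x 0) (x (Fin.last N))) with hW
  have hWvol : volume W = 0 := by
    rw [hW, measure_toMeasurable]; exact hZ
  have hsub : {t | ¬ (t ∈ subInt x n → Linv x n t ∉ Z)} ⊆ Linv x n ⁻¹' W := by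
    intro t ht
    simp only [Set.mem_setOf_eq, _root_.not_imp, not_not] at ht
    exact subset_toMeasurable _ _ ⟨ht.2, Linv_mem_Icc hx n ht.1⟩
  have hvol : volume (Linv x n ⁻¹' W) = 0 := by
    rw [volume_preimage_Linv hx hN, hWvol, mul_zero]
  rw [ae_iff]
  have := measure_mono_null hsub hvol
  exact le_antisymm (le_trans (Measure.restrict_le_self _) this.le) zero_le

variable {p : ℝ≥0∞} [Fact (1 ≤ p)]

/-- Main lower estimate. -/
lemma key_ineq (hx : StrictMono x) (hN : 0 < N) {μ : Measure ℝ}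
    (hμ : μ = volume.restrict (Set.Icc (x 0) (x (Fin.last N))))
    {Λ : ℝ} (hΛpos : 0 < Λ) (ε : Fin N → ℝ) (hε : ∀ n, |ε n| = Λ)
    (b h : ℝ → ℝ)
    (hb : AEStronglyMeasurable b μ)
    (hh : AEStronglyMeasurable h μ)
    (heq : ∀ n : Fin N, ∀ᵐ t ∂μ,
      t ∈ subInt x n → h t = ε n * (h (Linv x n t) - b (Linv x n t))) :
    eLpNorm b p μ ≤ eLpNorm h p μ + ENNReal.ofReal Λ⁻¹ * eLpNorm h p μ := by
  have hΦ' := hμ ▸ measurePreserving_Phi (N := N) hx hN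
  have hΦ : MeasurePreserving (Phi x) μ μ := by
    rw [hμ]; exact measurePreserving_Phi hx hN
  have hεne : ∀ n, ε n ≠ 0 := by
    intro n h0
    have h1 := hε n
    rw [h0, abs_zero] at h1
    exact hΛpos.ne h1
  set σ : ℝ → ℝ := fun t => ∑ n : Fin N, (subInt x n).indicator (fun _ => (ε n)⁻¹) t with hσ
  have hσmeas : Measurable σ := by
    apply Finset.measurable_sum
    intro n _
    exact measurable_const.indicator (measurableSet_subInt n)
  have hH : AEStronglyMeasurable (h ∘ Phi x) μ :=
    hh.comp_quasiMeasurePreserving hΦ.quasiMeasurePreserving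
  have hB : AEStronglyMeasurable (b ∘ Phi x) μ :=
    hb.comp_quasiMeasurePreserving hΦ.quasiMeasurePreserving
  have hmem : ∀ᵐ t ∂μ, t ∈ Set.Icc (x 0) (x (Fin.last N)) := by
    rw [hμ]; exact ae_restrict_mem measurableSet_Icc
  have hae : ∀ᵐ t ∂μ, (b ∘ Phi x) t = (h ∘ Phi x) t - σ t * h t := by
    filter_upwards [ae_all_iff.2 heq, hmem] with t hts htI
    obtain ⟨n, hn⟩ := exists_mem_subInt hx hN htI
    have hΦt : Phi x t = Linv x n t := Phi_eq hx hn
    have hσt : σ t = (ε n)⁻¹ := indicator_sum_eq hx _ hn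
    have hts' := hts n hn
    have hkey : (ε n)⁻¹ * h t = h (Linv x n t) - b (Linv x n t) := by
      rw [hts', ← mul_assoc, inv_mul_cancel₀ (hεne n), one_mul]
    simp only [Function.comp, hΦt, hσt]
    linarith [hkey]
  calc eLpNorm b p μ = eLpNorm (b ∘ Phi x) p μ :=
        (eLpNorm_comp_measurePreserving hb hΦ).symm
    _ = eLpNorm (fun t => (h ∘ Phi x) t - σ t * h t) p μ := eLpNorm_congr_ae hae
    _ ≤ eLpNorm (h ∘ Phi x) p μ + eLpNorm (fun t => σ t * h t) p μ := by
        have := eLpNorm_sub_le (μ := μ) (p := p) hH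
          (hσmeas.aestronglyMeasurable.mul hh) Fact.out
        exact this
    _ ≤ eLpNorm h p μ + ENNReal.ofReal Λ⁻¹ * eLpNorm h p μ := by
        gcongr
        · exact (eLpNorm_comp_measurePreserving hh hΦ).le
        · calc eLpNorm (fun t => σ t * h t) p μ ≤ eLpNorm (fun t => Λ⁻¹ * h t) p μ := by
                apply eLpNorm_mono
                intro t
                have hσb : |σ t| ≤ Λ⁻¹ := by
                  by_cases hc : ∃ n : Fin N, t ∈ subInt x n
                  · obtain ⟨n, hn⟩ := hc
                    have : σ t = (ε n)⁻¹ := indicator_sum_eq hx _ hn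
                    rw [this, abs_inv, hε n]
                  · push_neg at hc
                    have : σ t = 0 := by
                      rw [hσ]
                      exact Finset.sum_eq_zero fun n _ => Set.indicator_of_notMem (hc n) _
                    rw [this, abs_zero]
                    exact (inv_pos.2 hΛpos).le
                rw [Real.norm_eq_abs, Real.norm_eq_abs, abs_mul, abs_mul,
                  abs_of_pos (inv_pos.2 hΛpos)]
                exact mul_le_mul_of_nonneg_right hσb (abs_nonneg _)
            _ = ENNReal.ofReal Λ⁻¹ * eLpNorm h p μ := by
                have hfun : (fun t => Λ⁻¹ * h t) = (Λ⁻¹ : ℝ) • h := by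
                  funext t; simp
                rw [hfun, eLpNorm_const_smul]
                congr 1
                rw [← ofReal_norm, Real.norm_eq_abs,
                  abs_of_pos (inv_pos.2 hΛpos)]


/-- Contraction estimate. -/
lemma lip_ineq (hx : StrictMono x) (hN : 0 < N) {μ : Measure ℝ}
    (hμ : μ = volume.restrict (Set.Icc (x 0) (x (Fin.last N))))
    {Λ : ℝ} (hΛpos : 0 < Λ) (ε : Fin N → ℝ) (hε : ∀ n, |ε n| = Λ)
    (b h : ℝ → ℝ)
    (hb : AEStronglyMeasurable b μ)
    (hh : AEStronglyMeasurable h μ)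
    (heq : ∀ n : Fin N, ∀ᵐ t ∂μ,
      t ∈ subInt x n → h t = ε n * (h (Linv x n t) - b (Linv x n t))) :
    eLpNorm h p μ ≤ ENNReal.ofReal Λ * (eLpNorm h p μ + eLpNorm b p μ) := by
  have hΦ : MeasurePreserving (Phi x) μ μ := by
    rw [hμ]; exact measurePreserving_Phi hx hN
  have hmem : ∀ᵐ t ∂μ, t ∈ Set.Icc (x 0) (x (Fin.last N)) := by
    rw [hμ]; exact ae_restrict_mem measurableSet_Icc
  have hae : ∀ᵐ t ∂μ, ‖h t‖ = ‖(Λ • ((h - b) ∘ Phi x)) t‖ := by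
    filter_upwards [ae_all_iff.2 heq, hmem] with t hts htI
    obtain ⟨n, hn⟩ := exists_mem_subInt hx hN htI
    have hΦt : Phi x t = Linv x n t := Phi_eq hx hn
    rw [hts n hn]
    simp only [Pi.smul_apply, Function.comp, Pi.sub_apply, smul_eq_mul, hΦt,
      Real.norm_eq_abs, abs_mul, hε n, abs_of_pos hΛpos]
  calc eLpNorm h p μ = eLpNorm (Λ • ((h - b) ∘ Phi x)) p μ := eLpNorm_congr_norm_ae hae
    _ = ENNReal.ofReal Λ * eLpNorm ((h - b) ∘ Phi x) p μ := by
        rw [eLpNorm_const_smul]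
        congr 1
        rw [← ofReal_norm, Real.norm_eq_abs, abs_of_pos hΛpos]
    _ = ENNReal.ofReal Λ * eLpNorm (h - b) p μ := by
        rw [eLpNorm_comp_measurePreserving (hh.sub hb) hΦ]
    _ ≤ ENNReal.ofReal Λ * (eLpNorm h p μ + eLpNorm b p μ) :=
        by gcongr; exact eLpNorm_sub_le hh hb Fact.out

end FCAux

set_option maxHeartbeats 1000000 in
set_option synthInstance.maxHeartbeats 200000 in
/-- If every `α n` equals `Λ` or `−Λ` identically and `Λ ≠ 0`, then
`‖b‖_p ≤ ((1+Λ)/Λ)‖0 *_T b‖_p`, and consequently `P⁰₁` has closed range. -/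
theorem partial_convolution_null_seed_closed_range
    (N : ℕ) (hN : 2 ≤ N) (x : Fin (N + 1) → ℝ) (hx : StrictMono x)
    (μ : Measure ℝ) (hμ : μ = volume.restrict (Set.Icc (x 0) (x (Fin.last N))))
    (p : ℝ≥0∞) [Fact (1 ≤ p)]
    (α : Fin N → Lp ℝ ∞ μ)
    (Λ : ℝ) (hΛdef : Λ = ⨆ n : Fin N, ‖α n‖) (hΛ : Λ < 1) (hΛ0 : Λ ≠ 0)
    (hpm : ∀ n : Fin N, ((α n : ℝ → ℝ) =ᵐ[μ] fun _ => Λ) ∨ ((α n : ℝ → ℝ) =ᵐ[μ] fun _ => -Λ))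
    (P₁ : Lp ℝ p μ → Lp ℝ p μ)
    (hP₁ : ∀ b : Lp ℝ p μ, SelfRef μ x (fun n => ⇑(α n)) ⇑(0 : Lp ℝ p μ) ⇑b ⇑(P₁ b)) :
    (∀ b : Lp ℝ p μ, ‖b‖ ≤ (1 + Λ) / Λ * ‖P₁ b‖) ∧
    IsClosed (Set.range P₁) := by
  classical
  have hN0 : 0 < N := by omega
  have hΛnn : 0 ≤ Λ := by
    rw [hΛdef]
    exact le_trans (norm_nonneg (α ⟨0, hN0⟩))
      (le_ciSup (f := fun n : Fin N => ‖α n‖)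
        (Set.Finite.bddAbove (Set.finite_range _)) ⟨0, hN0⟩)
  have hΛpos : 0 < Λ := lt_of_le_of_ne hΛnn (Ne.symm hΛ0)
  set ε : Fin N → ℝ := fun n =>
    if ((α n : ℝ → ℝ) =ᵐ[μ] fun _ => Λ) then Λ else -Λ with hεdef
  have hα : ∀ n, (α n : ℝ → ℝ) =ᵐ[μ] fun _ => ε n := by
    intro n
    simp only [hεdef]
    split_ifs with hc
    · exact hc
    · exact (hpm n).resolve_left hc
  have hε : ∀ n, |ε n| = Λ := by
    intro n
    simp only [hεdef]
    split_ifs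
    · exact abs_of_pos hΛpos
    · rw [abs_neg]; exact abs_of_pos hΛpos
  have hpull : ∀ n : Fin N, ∀ᵐ t ∂μ, t ∈ subInt x n →
      (α n : ℝ → ℝ) (Linv x n t) = ε n := by
    intro n
    have hZ : μ {s | ¬ ((α n : ℝ → ℝ) s = ε n)} = 0 := ae_iff.1 (hα n)
    filter_upwards [FCAux.ae_pullback hx n hμ hZ] with t ht htn
    have := ht htn
    simpa using this
  have heq1 : ∀ b : Lp ℝ p μ, ∀ n : Fin N, ∀ᵐ t ∂μ, t ∈ subInt x n →
      (P₁ b : ℝ → ℝ) t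
        = ε n * ((P₁ b : ℝ → ℝ) (Linv x n t) - (b : ℝ → ℝ) (Linv x n t)) := by
    intro b n
    filter_upwards [hP₁ b n, hpull n, Lp.coeFn_zero (E := ℝ) (p := p) (μ := μ)]
      with t h1 h2 h0
    intro htn
    rw [h1 htn, h2 htn, h0, Pi.zero_apply, zero_add]
  have heq2 : ∀ b b' : Lp ℝ p μ, ∀ n : Fin N, ∀ᵐ t ∂μ, t ∈ subInt x n →
      ((P₁ b : ℝ → ℝ) - (P₁ b' : ℝ → ℝ)) t
        = ε n * (((P₁ b : ℝ → ℝ) - (P₁ b' : ℝ → ℝ)) (Linv x n t)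
            - ((b : ℝ → ℝ) - (b' : ℝ → ℝ)) (Linv x n t)) := by
    intro b b' n
    filter_upwards [heq1 b n, heq1 b' n] with t h1 h2 htn
    simp only [Pi.sub_apply]
    rw [h1 htn, h2 htn]
    ring
  -- the main norm inequality, for differences
  have hlow : ∀ b b' : Lp ℝ p μ,
      ‖b - b'‖ ≤ (1 + Λ) / Λ * ‖P₁ b - P₁ b'‖ := by
    intro b b'
    have hc : AEStronglyMeasurable ((b : ℝ → ℝ) - (b' : ℝ → ℝ)) μ :=
      (Lp.aestronglyMeasurable b).sub (Lp.aestronglyMeasurable b')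
    have hg : AEStronglyMeasurable ((P₁ b : ℝ → ℝ) - (P₁ b' : ℝ → ℝ)) μ :=
      (Lp.aestronglyMeasurable _).sub (Lp.aestronglyMeasurable _)
    have hkey := FCAux.key_ineq (p := p) hx hN0 hμ hΛpos ε hε
      ((b : ℝ → ℝ) - (b' : ℝ → ℝ)) ((P₁ b : ℝ → ℝ) - (P₁ b' : ℝ → ℝ))
      hc hg (heq2 b b')
    have e1 : eLpNorm ((P₁ b : ℝ → ℝ) - (P₁ b' : ℝ → ℝ)) p μ
        = eLpNorm (⇑(P₁ b - P₁ b')) p μ :=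
      (eLpNorm_congr_ae (Lp.coeFn_sub _ _)).symm
    have e2 : eLpNorm ((b : ℝ → ℝ) - (b' : ℝ → ℝ)) p μ
        = eLpNorm (⇑(b - b')) p μ :=
      (eLpNorm_congr_ae (Lp.coeFn_sub _ _)).symm
    rw [e1, e2] at hkey
    have hfin : eLpNorm (⇑(P₁ b - P₁ b')) p μ ≠ ∞ := Lp.eLpNorm_ne_top _
    rw [Lp.norm_def, Lp.norm_def]
    have h2 := ENNReal.toReal_mono (by finiteness) hkey
    refine h2.trans (le_of_eq ?_)
    rw [ENNReal.toReal_add hfin (by finiteness), ENNReal.toReal_mul,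
      ENNReal.toReal_ofReal (inv_nonneg.2 hΛnn)]
    field_simp
    ring
  have part1 : ∀ b : Lp ℝ p μ, ‖b‖ ≤ (1 + Λ) / Λ * ‖P₁ b‖ := by
    intro b
    have hkey := FCAux.key_ineq (p := p) hx hN0 hμ hΛpos ε hε
      (b : ℝ → ℝ) (P₁ b : ℝ → ℝ)
      (Lp.aestronglyMeasurable b) (Lp.aestronglyMeasurable (P₁ b))
      (heq1 b)
    have hfin : eLpNorm (⇑(P₁ b)) p μ ≠ ∞ := Lp.eLpNorm_ne_top _
    rw [Lp.norm_def, Lp.norm_def]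
    have h2 := ENNReal.toReal_mono (by finiteness) hkey
    refine h2.trans (le_of_eq ?_)
    rw [ENNReal.toReal_add hfin (by finiteness), ENNReal.toReal_mul,
      ENNReal.toReal_ofReal (inv_nonneg.2 hΛnn)]
    field_simp
    ring
  have hlip : ∀ b b' : Lp ℝ p μ,
      ‖P₁ b - P₁ b'‖ ≤ (Λ / (1 - Λ)) * ‖b - b'‖ := by
    intro b b'
    have hc : AEStronglyMeasurable ((b : ℝ → ℝ) - (b' : ℝ → ℝ)) μ :=
      (Lp.aestronglyMeasurable b).sub (Lp.aestronglyMeasurable b')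
    have hg : AEStronglyMeasurable ((P₁ b : ℝ → ℝ) - (P₁ b' : ℝ → ℝ)) μ :=
      (Lp.aestronglyMeasurable _).sub (Lp.aestronglyMeasurable _)
    have hkey := FCAux.lip_ineq (p := p) hx hN0 hμ hΛpos ε hε
      ((b : ℝ → ℝ) - (b' : ℝ → ℝ)) ((P₁ b : ℝ → ℝ) - (P₁ b' : ℝ → ℝ))
      hc hg (heq2 b b')
    have e1 : eLpNorm ((P₁ b : ℝ → ℝ) - (P₁ b' : ℝ → ℝ)) p μ
        = eLpNorm (⇑(P₁ b - P₁ b')) p μ :=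
      (eLpNorm_congr_ae (Lp.coeFn_sub _ _)).symm
    have e2 : eLpNorm ((b : ℝ → ℝ) - (b' : ℝ → ℝ)) p μ
        = eLpNorm (⇑(b - b')) p μ :=
      (eLpNorm_congr_ae (Lp.coeFn_sub _ _)).symm
    rw [e1, e2] at hkey
    have hGfin : eLpNorm (⇑(P₁ b - P₁ b')) p μ ≠ ∞ := Lp.eLpNorm_ne_top _
    have hCfin : eLpNorm (⇑(b - b')) p μ ≠ ∞ := Lp.eLpNorm_ne_top _
    rw [Lp.norm_def, Lp.norm_def]
    have hR : (eLpNorm (⇑(P₁ b - P₁ b')) p μ).toReal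
        ≤ Λ * ((eLpNorm (⇑(P₁ b - P₁ b')) p μ).toReal
            + (eLpNorm (⇑(b - b')) p μ).toReal) := by
      have h3 := ENNReal.toReal_mono (by finiteness) hkey
      rwa [ENNReal.toReal_mul, ENNReal.toReal_ofReal hΛnn,
        ENNReal.toReal_add hGfin hCfin] at h3
    rw [div_mul_eq_mul_div, le_div_iff₀ (by linarith)]
    nlinarith [ENNReal.toReal_nonneg (a := eLpNorm (⇑(b - b')) p μ)]
  refine ⟨part1, ?_⟩
  apply IsSeqClosed.isClosed
  intro u y hu huy
  choose v hv using hu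
  set K : ℝ := (1 + Λ) / Λ with hK
  have hKpos : 0 < K := by positivity
  have hvcauchy : CauchySeq v := by
    rw [Metric.cauchySeq_iff]
    intro δ hδ
    obtain ⟨M, hM⟩ := Metric.cauchySeq_iff.1 huy.cauchySeq (δ / (K + 1))
      (by positivity)
    refine ⟨M, fun m hm k hk => ?_⟩
    have hlow' := hlow (v m) (v k)
    rw [hv m, hv k] at hlow'
    calc dist (v m) (v k) = ‖v m - v k‖ := dist_eq_norm _ _
      _ ≤ K * ‖u m - u k‖ := hlow'
      _ = K * dist (u m) (u k) := by rw [dist_eq_norm]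
      _ < δ := by
          have hd := hM m hm k hk
          have h5 : K * dist (u m) (u k) < K * (δ / (K + 1)) :=
            mul_lt_mul_of_pos_left hd hKpos
          have h6 : K * (δ / (K + 1)) < δ := by
            rw [mul_comm, div_mul_eq_mul_div, div_lt_iff₀ (by positivity)]
            nlinarith
          linarith
  obtain ⟨bl, hbl⟩ := cauchySeq_tendsto_of_complete hvcauchy
  refine ⟨bl, ?_⟩
  have hdist0 : Filter.Tendsto (fun k => dist (v k) bl) Filter.atTop (nhds 0) :=
    tendsto_iff_dist_tendsto_zero.1 hbl
  have hPy : Filter.Tendsto u Filter.atTop (nhds (P₁ bl)) := by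
    rw [tendsto_iff_dist_tendsto_zero]
    apply squeeze_zero (fun k => dist_nonneg)
      (g := fun k => (Λ / (1 - Λ)) * dist (v k) bl)
    · intro k
      rw [← hv k, dist_eq_norm, dist_eq_norm]
      exact hlip (v k) bl
    · have := hdist0.const_mul (Λ / (1 - Λ))
      simpa using this
  exact tendsto_nhds_unique hPy huy

end
end

section
/- For any Λ < 1 and every b ∈ L^p(I) (1 ≤ p ≤ ∞), (1 + Λ)‖b − (0 *_T b)‖_p ≥ ‖b‖_p. Consequently, the operator I − P⁰₁ : L^p(I) → L^p(I), b ↦ b − (0 *_T b), is injective and has closed range in L^p(I). -/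
open MeasureTheory ENNReal

noncomputable section

lemma ofReal_norm_eq_coe_nnnorm {E : Type*} [SeminormedAddCommGroup E] (a : E) :
    ENNReal.ofReal ‖a‖ = (‖a‖₊ : ℝ≥0∞) := ofReal_norm a

lemma coe_nnnorm_ae_le_eLpNormEssSup {α E : Type*} [NormedAddCommGroup E] {_ : MeasurableSpace α}
    (f : α → E) (μ : Measure α) : ∀ᵐ y ∂μ, (‖f y‖₊ : ℝ≥0∞) ≤ eLpNormEssSup f μ :=
  enorm_ae_le_eLpNormEssSup f μ

lemma eLpNorm_eq_lintegral_rpow_nnnorm {α E : Type*} [NormedAddCommGroup E] {_ : MeasurableSpace α}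
    {f : α → E} {p : ℝ≥0∞} {μ : Measure α} (hp0 : p ≠ 0) (hpt : p ≠ ∞) :
    eLpNorm f p μ = (∫⁻ x, (‖f x‖₊ : ℝ≥0∞) ^ p.toReal ∂μ) ^ (1 / p.toReal) :=
  eLpNorm_eq_lintegral_rpow_enorm_toReal hp0 hpt

section Aux
variable {N : ℕ} {x : Fin (N + 1) → ℝ}

lemma aux_zero_lt_last (hN : 0 < N) : (0 : Fin (N + 1)) < Fin.last N := by
  rw [Fin.lt_def]; simpa using hN

lemma subInt_subset (n : Fin N) : subInt x n ⊆ Set.Icc (x n.castSucc) (x n.succ) := by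
  unfold subInt; split
  · exact subset_rfl
  · exact Set.Ioc_subset_Icc_self

lemma Ioc_subset_subInt (n : Fin N) :
    Set.Ioc (x n.castSucc) (x n.succ) ⊆ subInt x n := by
  unfold subInt; split
  · exact Set.Ioc_subset_Icc_self
  · exact subset_rfl

lemma measurableSet_subInt (n : Fin N) : MeasurableSet (subInt x n) := by
  unfold subInt; split
  · exact measurableSet_Icc
  · exact measurableSet_Ioc

lemma subInt_subset_Icc (hx : StrictMono x) (n : Fin N) :
    subInt x n ⊆ Set.Icc (x 0) (x (Fin.last N)) :=
  (subInt_subset n).trans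
    (Set.Icc_subset_Icc (hx.monotone (Fin.zero_le _)) (hx.monotone (Fin.le_last _)))

lemma iUnion_subInt (hx : StrictMono x) (hN : 0 < N) :
    (⋃ n : Fin N, subInt x n) = Set.Icc (x 0) (x (Fin.last N)) := by
  apply Set.Subset.antisymm
  · exact Set.iUnion_subset fun n => subInt_subset_Icc hx n
  · intro t ht
    obtain ⟨ht0, htN⟩ := ht
    classical
    set s : Finset (Fin (N + 1)) := Finset.univ.filter (fun m => x m < t) with hs
    rcases s.eq_empty_or_nonempty with he | hne
    · have h0 : ¬ x 0 < t := by
        intro h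
        have : (0 : Fin (N+1)) ∈ s := by simp [hs, h]
        simp [he] at this
      have ht' : t = x 0 := le_antisymm (not_lt.1 h0) ht0
      refine Set.mem_iUnion.2 ⟨⟨0, hN⟩, ?_⟩
      have h00 : (⟨0, hN⟩ : Fin N).val = 0 := rfl
      unfold subInt
      rw [if_pos h00]
      have hc : (⟨0, hN⟩ : Fin N).castSucc = 0 := rfl
      rw [hc, ht']
      exact ⟨le_refl _, hx.monotone (Fin.zero_le _)⟩
    · set m := s.max' hne with hm
      have hmt : x m < t := by
        have := s.max'_mem hne
        simpa [hs] using this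
      have hmN : m.val < N := by
        rcases lt_or_eq_of_le (Nat.lt_succ_iff.1 m.isLt) with h | h
        · exact h
        · exfalso
          have : m = Fin.last N := Fin.ext h
          rw [this] at hmt
          exact absurd (lt_of_lt_of_le hmt htN) (lt_irrefl _)
      set n : Fin N := ⟨m.val, hmN⟩ with hn
      have hcs : n.castSucc = m := rfl
      have hle : t ≤ x n.succ := by
        by_contra hlt
        have hmem : n.succ ∈ s := by simp [hs, not_le.1 hlt]
        have := s.le_max' _ hmem
        rw [← hm] at this
        have h2 : m < n.succ := by
          rw [← hcs]; exact (Fin.castSucc_lt_succ : n.castSucc < n.succ)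
        exact absurd (lt_of_lt_of_le h2 this) (lt_irrefl _)
      exact Set.mem_iUnion.2 ⟨n, Ioc_subset_subInt n ⟨by rw [hcs]; exact hmt, hle⟩⟩

lemma disjoint_subInt (hx : StrictMono x) :
    Pairwise (Function.onFun Disjoint fun n : Fin N => subInt x n) := by
  have key : ∀ n m : Fin N, n < m → Disjoint (subInt x n) (subInt x m) := by
    intro n m hnm
    rw [Set.disjoint_left]
    intro t htn htm
    have h1 : t ≤ x n.succ := (subInt_subset n htn).2
    have hm0 : ¬ m.val = 0 := by
      have := Fin.lt_iff_val_lt_val.1 hnm; omega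
    have h2 : x m.castSucc < t := by
      have : subInt x m = Set.Ioc (x m.castSucc) (x m.succ) := if_neg hm0
      rw [this] at htm; exact htm.1
    have h3 : x n.succ ≤ x m.castSucc := by
      apply hx.monotone
      rw [Fin.le_def]
      simp only [Fin.val_succ, Fin.coe_castSucc]
      exact Fin.lt_iff_val_lt_val.1 hnm
    linarith
  intro n m hnm
  rcases lt_or_gt_of_ne hnm with h | h
  · exact key n m h
  · exact (key m n h).symm

lemma Linv_affine (n : Fin N) :
    Linv x n = (fun t => t + (x 0 - (x (Fin.last N) - x 0) / (x n.succ - x n.castSucc) * x n.castSucc)) ∘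
      (fun t => (x (Fin.last N) - x 0) / (x n.succ - x n.castSucc) * t) := by
  funext t
  simp only [Linv, Function.comp]
  ring

lemma measurable_Linv (n : Fin N) : Measurable (Linv x n) := by
  rw [Linv_affine n]
  exact (measurable_add_const _).comp (measurable_const_mul _)

lemma map_Linv_volume (hx : StrictMono x) (hN : 0 < N) (n : Fin N) :
    Measure.map (Linv x n) volume
      = ENNReal.ofReal ((x n.succ - x n.castSucc) / (x (Fin.last N) - x 0)) • volume := by
  have hdc : (0:ℝ) < x n.succ - x n.castSucc := sub_pos.2 (hx ((Fin.castSucc_lt_succ : n.castSucc < n.succ)))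
  have hBa : (0:ℝ) < x (Fin.last N) - x 0 := sub_pos.2 (hx (aux_zero_lt_last hN))
  set k : ℝ := (x (Fin.last N) - x 0) / (x n.succ - x n.castSucc) with hk
  have hkpos : 0 < k := div_pos hBa hdc
  have hkne : k ≠ 0 := ne_of_gt hkpos
  rw [Linv_affine n, ← hk]
  rw [← Measure.map_map (measurable_add_const _) (measurable_const_mul k)]
  rw [Real.map_volume_mul_left hkne]
  rw [Measure.map_smul]
  rw [map_add_right_eq_self volume _]
  congr 1
  rw [abs_of_pos (inv_pos.2 hkpos), hk]
  rw [inv_div]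

lemma Linv_maps_to (hx : StrictMono x) (hN : 0 < N) (n : Fin N) {t : ℝ}
    (ht : t ∈ Set.Icc (x n.castSucc) (x n.succ)) :
    Linv x n t ∈ Set.Icc (x 0) (x (Fin.last N)) := by
  have hdc : (0:ℝ) < x n.succ - x n.castSucc := sub_pos.2 (hx ((Fin.castSucc_lt_succ : n.castSucc < n.succ)))
  have hBa : (0:ℝ) < x (Fin.last N) - x 0 := sub_pos.2 (hx (aux_zero_lt_last hN))
  obtain ⟨h1, h2⟩ := ht
  constructor
  · have : 0 ≤ (t - x n.castSucc) * (x (Fin.last N) - x 0) / (x n.succ - x n.castSucc) :=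
      div_nonneg (mul_nonneg (by linarith) (le_of_lt hBa)) (le_of_lt hdc)
    simp only [Linv]; linarith
  · have : (t - x n.castSucc) * (x (Fin.last N) - x 0) / (x n.succ - x n.castSucc)
        ≤ x (Fin.last N) - x 0 := by
      rw [div_le_iff₀ hdc]
      nlinarith
    simp only [Linv]; linarith

lemma sum_lengths (hx : StrictMono x) :
    ∑ n : Fin N, (x n.succ - x n.castSucc) = x (Fin.last N) - x 0 := by
  set g : ℕ → ℝ := fun i => x ⟨min i N, by omega⟩ with hg
  have hf : ∀ n : Fin N, x n.succ - x n.castSucc = g (n.val + 1) - g n.val := by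
    intro n
    have h1 : (⟨min (n.val + 1) N, by omega⟩ : Fin (N+1)) = n.succ := by
      apply Fin.ext; simp [Nat.min_eq_left n.isLt]
    have h2 : (⟨min n.val N, by omega⟩ : Fin (N+1)) = n.castSucc := by
      apply Fin.ext; simp [Nat.min_eq_left (le_of_lt n.isLt)]
    simp only [hg, h1, h2]
  calc ∑ n : Fin N, (x n.succ - x n.castSucc)
      = ∑ n : Fin N, (g (n.val + 1) - g n.val) :=
        Finset.sum_congr rfl fun n _ => hf n
    _ = ∑ i ∈ Finset.range N, (g (i + 1) - g i) :=
        Fin.sum_univ_eq_sum_range (fun i => g (i + 1) - g i) N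
    _ = g N - g 0 := Finset.sum_range_sub g N
    _ = x (Fin.last N) - x 0 := by
        simp only [hg]
        congr 1 <;> apply congrArg <;> apply Fin.ext <;> simp

end Aux

section Key

variable {N : ℕ} {x : Fin (N + 1) → ℝ} {μ : Measure ℝ}

set_option maxHeartbeats 2000000 in
theorem keyEst (hN : 0 < N) (hx : StrictMono x)
    (hμ : μ = volume.restrict (Set.Icc (x 0) (x (Fin.last N))))
    {p : ℝ≥0∞} (hp : 1 ≤ p)
    {α : Fin N → Lp ℝ ∞ μ} {Λ : ℝ} (hΛ0 : 0 ≤ Λ)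
    (hα : ∀ n, ∀ᵐ y ∂μ, ‖(α n : ℝ → ℝ) y‖ ≤ Λ)
    {w g : ℝ → ℝ} (hg : AEMeasurable g μ)
    (hw : ∀ n : Fin N, ∀ᵐ t ∂μ, t ∈ subInt x n →
      w t = (α n : ℝ → ℝ) (Linv x n t) * g (Linv x n t)) :
    eLpNorm w p μ ≤ ENNReal.ofReal Λ * eLpNorm g p μ := by
  have hBa : (0:ℝ) < x (Fin.last N) - x 0 := sub_pos.2 (hx (aux_zero_lt_last hN))
  set Icc : Set ℝ := Set.Icc (x 0) (x (Fin.last N)) with hIcc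
  -- restriction measures
  have hres : ∀ n : Fin N, volume.restrict (subInt x n) = μ.restrict (subInt x n) := by
    intro n
    rw [hμ, Measure.restrict_restrict (measurableSet_subInt n),
      Set.inter_eq_self_of_subset_left (subInt_subset_Icc hx n)]
  have hsub : ∀ n : Fin N, subInt x n ⊆ (Linv x n) ⁻¹' Icc := fun n t ht =>
    Linv_maps_to hx hN n (subInt_subset n ht)
  have hmap : ∀ n : Fin N, Measure.map (Linv x n) (volume.restrict ((Linv x n) ⁻¹' Icc))
      = ENNReal.ofReal ((x n.succ - x n.castSucc) / (x (Fin.last N) - x 0)) • μ := by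
    intro n
    rw [← Measure.restrict_map (measurable_Linv n) measurableSet_Icc,
      map_Linv_volume hx hN n, Measure.restrict_smul, ← hμ]
  have qmp : ∀ n : Fin N,
      Measure.QuasiMeasurePreserving (Linv x n) (volume.restrict (subInt x n)) μ := by
    intro n
    refine ⟨measurable_Linv n, ?_⟩
    have h1 : Measure.map (Linv x n) (volume.restrict (subInt x n))
        ≤ Measure.map (Linv x n) (volume.restrict ((Linv x n) ⁻¹' Icc)) :=
      Measure.map_mono (Measure.restrict_mono (hsub n) le_rfl) (measurable_Linv n)
    refine (Measure.absolutelyContinuous_of_le h1).trans ?_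
    rw [hmap n]
    exact Measure.smul_absolutelyContinuous
  have haeres : ∀ (n : Fin N) (P : ℝ → Prop), (∀ᵐ t ∂μ, P t) →
      (∀ᵐ t ∂(volume.restrict (subInt x n)), P t) := by
    intro n P hP
    rw [hres n]
    exact ae_restrict_of_ae hP
  have hαL : ∀ n : Fin N, ∀ᵐ t ∂(volume.restrict (subInt x n)),
      ‖(α n : ℝ → ℝ) (Linv x n t)‖ ≤ Λ := fun n => (qmp n).ae (hα n)
  -- transfer restricted ae facts to μ with implication
  have himp : ∀ (n : Fin N) (P : ℝ → Prop),
      (∀ᵐ t ∂(volume.restrict (subInt x n)), P t) →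
      (∀ᵐ t ∂μ, t ∈ subInt x n → P t) := by
    intro n P hP
    rw [hres n] at hP
    exact ae_imp_of_ae_restrict hP
  have hmem : ∀ᵐ t ∂μ, t ∈ Icc := by
    rw [hμ]; exact ae_restrict_mem measurableSet_Icc
  by_cases hptop : p = ∞
  · -- essential supremum case
    subst hptop
    rw [eLpNorm_exponent_top, eLpNorm_exponent_top]
    set S := eLpNormEssSup g μ with hS
    have hgS : ∀ᵐ y ∂μ, (‖g y‖₊ : ℝ≥0∞) ≤ S := coe_nnnorm_ae_le_eLpNormEssSup g μ
    have hQ : ∀ n : Fin N, ∀ᵐ t ∂μ, t ∈ subInt x n →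
        (‖w t‖₊ : ℝ≥0∞) ≤ ENNReal.ofReal Λ * S := by
      intro n
      have h1 := himp n _ ((qmp n).ae hgS)
      have h2 := himp n _ (hαL n)
      filter_upwards [hw n, h1, h2] with t hwt hgt hαt htm
      rw [hwt htm]
      calc (‖(α n : ℝ → ℝ) (Linv x n t) * g (Linv x n t)‖₊ : ℝ≥0∞)
          = (‖(α n : ℝ → ℝ) (Linv x n t)‖₊ : ℝ≥0∞) * (‖g (Linv x n t)‖₊ : ℝ≥0∞) := by
            rw [nnnorm_mul, ENNReal.coe_mul]
        _ ≤ ENNReal.ofReal Λ * S := by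
            apply mul_le_mul' _ (hgt htm)
            rw [← ofReal_norm_eq_coe_nnnorm]
            exact ENNReal.ofReal_le_ofReal (hαt htm)
    have hclaim : ∀ᵐ t ∂μ, (‖w t‖₊ : ℝ≥0∞) ≤ ENNReal.ofReal Λ * S := by
      have hall := ae_all_iff.2 hQ
      filter_upwards [hall, hmem] with t h1 h2
      rw [hIcc, ← iUnion_subInt hx hN] at h2
      obtain ⟨n, hn⟩ := Set.mem_iUnion.1 h2
      exact h1 n hn
    exact essSup_le_of_ae_le _ hclaim
  · -- finite p
    have hp0 : p ≠ 0 := (lt_of_lt_of_le zero_lt_one hp).ne'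
    set q : ℝ := p.toReal with hq'
    have hq : 0 < q := ENNReal.toReal_pos hp0 hptop
    rw [eLpNorm_eq_lintegral_rpow_nnnorm hp0 hptop, eLpNorm_eq_lintegral_rpow_nnnorm hp0 hptop]
    set A := ∫⁻ y, (‖g y‖₊ : ℝ≥0∞) ^ q ∂μ with hA
    have hmain : ∫⁻ t, (‖w t‖₊ : ℝ≥0∞) ^ q ∂μ ≤ (ENNReal.ofReal Λ) ^ q * A := by
      have hdecomp : μ = Measure.sum (fun n : Fin N => volume.restrict (subInt x n)) := by
        rw [hμ, hIcc, ← iUnion_subInt hx hN,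
          Measure.restrict_iUnion (disjoint_subInt hx) (fun n => measurableSet_subInt n)]
      have hper : ∀ n : Fin N, ∫⁻ t, (‖w t‖₊ : ℝ≥0∞) ^ q ∂(volume.restrict (subInt x n))
          ≤ (ENNReal.ofReal Λ) ^ q
            * (ENNReal.ofReal ((x n.succ - x n.castSucc) / (x (Fin.last N) - x 0)) * A) := by
        intro n
        have hptw : ∀ᵐ t ∂(volume.restrict (subInt x n)),
            (‖w t‖₊ : ℝ≥0∞) ^ q
              ≤ (ENNReal.ofReal Λ) ^ q * (‖g (Linv x n t)‖₊ : ℝ≥0∞) ^ q := by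
          have hmem' : ∀ᵐ t ∂(volume.restrict (subInt x n)), t ∈ subInt x n := by
            rw [hres n]
            exact ae_restrict_mem₀ (measurableSet_subInt n).nullMeasurableSet
          filter_upwards [haeres n _ (hw n), hmem', hαL n] with t h1 h2 h3
          have hb : ‖w t‖ ≤ Λ * ‖g (Linv x n t)‖ := by
            rw [h1 h2, norm_mul]
            exact mul_le_mul_of_nonneg_right h3 (norm_nonneg _)
          calc (‖w t‖₊ : ℝ≥0∞) ^ q = (ENNReal.ofReal ‖w t‖) ^ q := by
                rw [ofReal_norm_eq_coe_nnnorm]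
            _ ≤ (ENNReal.ofReal (Λ * ‖g (Linv x n t)‖)) ^ q :=
                ENNReal.rpow_le_rpow (ENNReal.ofReal_le_ofReal hb) hq.le
            _ = (ENNReal.ofReal Λ * ENNReal.ofReal ‖g (Linv x n t)‖) ^ q := by
                rw [ENNReal.ofReal_mul hΛ0]
            _ = (ENNReal.ofReal Λ) ^ q * (ENNReal.ofReal ‖g (Linv x n t)‖) ^ q :=
                ENNReal.mul_rpow_of_nonneg _ _ hq.le
            _ = (ENNReal.ofReal Λ) ^ q * (‖g (Linv x n t)‖₊ : ℝ≥0∞) ^ q := by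
                rw [ofReal_norm_eq_coe_nnnorm]
        calc ∫⁻ t, (‖w t‖₊ : ℝ≥0∞) ^ q ∂(volume.restrict (subInt x n))
            ≤ ∫⁻ t, (ENNReal.ofReal Λ) ^ q * (‖g (Linv x n t)‖₊ : ℝ≥0∞) ^ q
                ∂(volume.restrict (subInt x n)) := lintegral_mono_ae hptw
          _ = (ENNReal.ofReal Λ) ^ q
              * ∫⁻ t, (‖g (Linv x n t)‖₊ : ℝ≥0∞) ^ q ∂(volume.restrict (subInt x n)) :=
              lintegral_const_mul' _ _ (ENNReal.rpow_ne_top_of_nonneg hq.le ENNReal.ofReal_ne_top)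
          _ ≤ (ENNReal.ofReal Λ) ^ q
              * ∫⁻ t, (‖g (Linv x n t)‖₊ : ℝ≥0∞) ^ q
                  ∂(volume.restrict ((Linv x n) ⁻¹' Icc)) := by
              gcongr
              exact hsub n
          _ = (ENNReal.ofReal Λ) ^ q
              * (ENNReal.ofReal ((x n.succ - x n.castSucc) / (x (Fin.last N) - x 0)) * A) := by
              congr 1
              have hGm : AEMeasurable (fun y => (‖g y‖₊ : ℝ≥0∞) ^ q)
                  (Measure.map (Linv x n) (volume.restrict ((Linv x n) ⁻¹' Icc))) := by
                rw [hmap n]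
                exact (hg.enorm.pow aemeasurable_const).smul_measure _
              rw [← lintegral_map' hGm (measurable_Linv n).aemeasurable, hmap n,
                lintegral_smul_measure, smul_eq_mul]
      have hsum1 : ∑ n : Fin N,
          ENNReal.ofReal ((x n.succ - x n.castSucc) / (x (Fin.last N) - x 0)) = 1 := by
        rw [← ENNReal.ofReal_sum_of_nonneg]
        · rw [← Finset.sum_div, sum_lengths hx, div_self (ne_of_gt hBa), ENNReal.ofReal_one]
        · intro n _
          have : (0:ℝ) ≤ x n.succ - x n.castSucc :=
            sub_nonneg.2 (hx.monotone ((Fin.castSucc_lt_succ : n.castSucc < n.succ)).le)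
          positivity
      calc ∫⁻ t, (‖w t‖₊ : ℝ≥0∞) ^ q ∂μ
          = ∑' n : Fin N, ∫⁻ t, (‖w t‖₊ : ℝ≥0∞) ^ q ∂(volume.restrict (subInt x n)) := by
            conv_lhs => rw [hdecomp]
            exact lintegral_sum_measure _ _
        _ = ∑ n : Fin N, ∫⁻ t, (‖w t‖₊ : ℝ≥0∞) ^ q ∂(volume.restrict (subInt x n)) :=
            tsum_fintype _
        _ ≤ ∑ n : Fin N, (ENNReal.ofReal Λ) ^ q
            * (ENNReal.ofReal ((x n.succ - x n.castSucc) / (x (Fin.last N) - x 0)) * A) :=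
            Finset.sum_le_sum fun n _ => hper n
        _ = (ENNReal.ofReal Λ) ^ q * A
            * ∑ n : Fin N, ENNReal.ofReal ((x n.succ - x n.castSucc) / (x (Fin.last N) - x 0)) := by
            rw [Finset.mul_sum]
            exact Finset.sum_congr rfl fun n _ => by ring
        _ = (ENNReal.ofReal Λ) ^ q * A := by rw [hsum1, mul_one]
    calc (∫⁻ t, (‖w t‖₊ : ℝ≥0∞) ^ q ∂μ) ^ (1 / q)
        ≤ ((ENNReal.ofReal Λ) ^ q * A) ^ (1 / q) :=
          ENNReal.rpow_le_rpow hmain (by positivity)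
      _ = ENNReal.ofReal Λ * A ^ (1 / q) := by
          rw [ENNReal.mul_rpow_of_nonneg _ _ (by positivity : (0:ℝ) ≤ 1 / q),
            ← ENNReal.rpow_mul, mul_one_div, div_self hq.ne', ENNReal.rpow_one]

end Key

set_option maxHeartbeats 1000000 in
/-- For any `Λ < 1`, `(1 + Λ)‖b − (0 *_T b)‖_p ≥ ‖b‖_p`;
consequently the operator `I − P⁰₁ : b ↦ b − (0 *_T b)` is injective and has
closed range in `L^p(I)`. -/
theorem id_sub_partial_convolution_injective_closed_range
    (N : ℕ) (hN : 2 ≤ N) (x : Fin (N + 1) → ℝ) (hx : StrictMono x)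
    (μ : Measure ℝ) (hμ : μ = volume.restrict (Set.Icc (x 0) (x (Fin.last N))))
    (p : ℝ≥0∞) [Fact (1 ≤ p)]
    (α : Fin N → Lp ℝ ∞ μ)
    (Λ : ℝ) (hΛdef : Λ = ⨆ n : Fin N, ‖α n‖) (hΛ : Λ < 1)
    (P₁ : Lp ℝ p μ → Lp ℝ p μ)
    (hP₁ : ∀ b : Lp ℝ p μ, SelfRef μ x (fun n => ⇑(α n)) ⇑(0 : Lp ℝ p μ) ⇑b ⇑(P₁ b)) :
    (∀ b : Lp ℝ p μ, ‖b‖ ≤ (1 + Λ) * ‖b - P₁ b‖) ∧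
    Function.Injective (fun b : Lp ℝ p μ => b - P₁ b) ∧
    IsClosed (Set.range fun b : Lp ℝ p μ => b - P₁ b) := by
  have hN0 : 0 < N := by omega
  have hp : 1 ≤ p := Fact.out
  have hbdd : BddAbove (Set.range fun n : Fin N => ‖α n‖) := (Set.finite_range _).bddAbove
  have hΛge : ∀ n, ‖α n‖ ≤ Λ := fun n => hΛdef ▸ le_ciSup hbdd n
  have hΛ0 : 0 ≤ Λ := le_trans (norm_nonneg (α ⟨0, hN0⟩)) (hΛge ⟨0, hN0⟩)
  have hα : ∀ n, ∀ᵐ y ∂μ, ‖(α n : ℝ → ℝ) y‖ ≤ Λ := by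
    intro n
    have h1 := coe_nnnorm_ae_le_eLpNormEssSup (α n : ℝ → ℝ) μ
    have h2 : eLpNormEssSup (α n : ℝ → ℝ) μ = ENNReal.ofReal ‖α n‖ := by
      rw [Lp.norm_def, ← eLpNorm_exponent_top, ENNReal.ofReal_toReal (Lp.eLpNorm_ne_top _)]
    filter_upwards [h1] with y hy
    rw [h2, ← ofReal_norm_eq_coe_nnnorm] at hy
    exact le_trans ((ENNReal.ofReal_le_ofReal_iff (norm_nonneg _)).1 hy) (hΛge n)
  have normle : ∀ (u v : Lp ℝ p μ),
      eLpNorm (⇑u) p μ ≤ ENNReal.ofReal Λ * eLpNorm (⇑v) p μ → ‖u‖ ≤ Λ * ‖v‖ := by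
    intro u v h
    rw [Lp.norm_def, Lp.norm_def]
    calc (eLpNorm (⇑u) p μ).toReal ≤ (ENNReal.ofReal Λ * eLpNorm (⇑v) p μ).toReal :=
        ENNReal.toReal_mono (ENNReal.mul_ne_top ENNReal.ofReal_ne_top (Lp.eLpNorm_ne_top v)) h
      _ = Λ * (eLpNorm (⇑v) p μ).toReal := by
        rw [ENNReal.toReal_mul, ENNReal.toReal_ofReal hΛ0]
  have est1 : ∀ b : Lp ℝ p μ, ‖P₁ b‖ ≤ Λ * ‖b - P₁ b‖ := by
    intro b
    have hw : ∀ n : Fin N, ∀ᵐ t ∂μ, t ∈ subInt x n →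
        (P₁ b : ℝ → ℝ) t = (α n : ℝ → ℝ) (Linv x n t)
          * ((fun y => (P₁ b : ℝ → ℝ) y - (b : ℝ → ℝ) y) (Linv x n t)) := by
      intro n
      filter_upwards [hP₁ b n, Lp.coeFn_zero ℝ p μ] with t h1 h2 htm
      rw [h1 htm, h2]
      simp
    have hg : AEMeasurable (fun y => (P₁ b : ℝ → ℝ) y - (b : ℝ → ℝ) y) μ :=
      ((Lp.aestronglyMeasurable (P₁ b)).sub (Lp.aestronglyMeasurable b)).aemeasurable
    have h := keyEst hN0 hx hμ hp hΛ0 hα hg hw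
    have he : eLpNorm (fun y => (P₁ b : ℝ → ℝ) y - (b : ℝ → ℝ) y) p μ
        = eLpNorm (⇑(P₁ b - b)) p μ :=
      eLpNorm_congr_ae (Lp.coeFn_sub (P₁ b) b).symm
    rw [he] at h
    have := normle (P₁ b) (P₁ b - b) h
    rwa [norm_sub_rev] at this
  have est2 : ∀ b b' : Lp ℝ p μ,
      ‖P₁ b - P₁ b'‖ ≤ Λ * ‖(b - b') - (P₁ b - P₁ b')‖ := by
    intro b b'
    have hw : ∀ n : Fin N, ∀ᵐ t ∂μ, t ∈ subInt x n →
        (fun t => (P₁ b : ℝ → ℝ) t - (P₁ b' : ℝ → ℝ) t) t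
          = (α n : ℝ → ℝ) (Linv x n t)
            * ((fun y => ((P₁ b : ℝ → ℝ) y - (P₁ b' : ℝ → ℝ) y)
                - ((b : ℝ → ℝ) y - (b' : ℝ → ℝ) y)) (Linv x n t)) := by
      intro n
      filter_upwards [hP₁ b n, hP₁ b' n, Lp.coeFn_zero ℝ p μ] with t h1 h2 h3 htm
      rw [h1 htm, h2 htm, h3]
      ring
    have hg : AEMeasurable (fun y => ((P₁ b : ℝ → ℝ) y - (P₁ b' : ℝ → ℝ) y)
        - ((b : ℝ → ℝ) y - (b' : ℝ → ℝ) y)) μ :=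
      (((Lp.aestronglyMeasurable (P₁ b)).sub (Lp.aestronglyMeasurable (P₁ b'))).sub
        ((Lp.aestronglyMeasurable b).sub (Lp.aestronglyMeasurable b'))).aemeasurable
    have h := keyEst hN0 hx hμ hp hΛ0 hα hg hw
    have he1 : eLpNorm (fun t => (P₁ b : ℝ → ℝ) t - (P₁ b' : ℝ → ℝ) t) p μ
        = eLpNorm (⇑(P₁ b - P₁ b')) p μ :=
      eLpNorm_congr_ae (Lp.coeFn_sub (P₁ b) (P₁ b')).symm
    have he2 : eLpNorm (fun y => ((P₁ b : ℝ → ℝ) y - (P₁ b' : ℝ → ℝ) y)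
        - ((b : ℝ → ℝ) y - (b' : ℝ → ℝ) y)) p μ
        = eLpNorm (⇑((P₁ b - P₁ b') - (b - b'))) p μ := by
      apply eLpNorm_congr_ae
      filter_upwards [Lp.coeFn_sub (P₁ b - P₁ b') (b - b'), Lp.coeFn_sub (P₁ b) (P₁ b'),
        Lp.coeFn_sub b b'] with t k1 k2 k3
      rw [k1, Pi.sub_apply, k2, k3, Pi.sub_apply, Pi.sub_apply]
    rw [he1, he2] at h
    have := normle (P₁ b - P₁ b') ((P₁ b - P₁ b') - (b - b')) h
    rwa [norm_sub_rev ((P₁ b - P₁ b')) (b - b')] at this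
  refine ⟨?_, ?_, ?_⟩
  · intro b
    have h1 := est1 b
    have h2 : ‖b‖ ≤ ‖b - P₁ b‖ + ‖P₁ b‖ := by
      calc ‖b‖ = ‖(b - P₁ b) + P₁ b‖ := by rw [sub_add_cancel]
        _ ≤ ‖b - P₁ b‖ + ‖P₁ b‖ := norm_add_le _ _
    calc ‖b‖ ≤ ‖b - P₁ b‖ + Λ * ‖b - P₁ b‖ := by linarith
      _ = (1 + Λ) * ‖b - P₁ b‖ := by ring
  · intro b b' h
    replace h : b - P₁ b = b' - P₁ b' := h
    have hkey : (b - b') - (P₁ b - P₁ b') = 0 := by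
      have : (b - b') - (P₁ b - P₁ b') = (b - P₁ b) - (b' - P₁ b') := by abel
      rw [this, h, sub_self]
    have h2 := est2 b b'
    rw [hkey, norm_zero, mul_zero] at h2
    have h3 : P₁ b = P₁ b' := by
      have := le_antisymm h2 (norm_nonneg _)
      exact sub_eq_zero.1 (norm_eq_zero.1 this)
    have h4 : b - P₁ b' = b' - P₁ b' := by rw [← h3, h, h3]
    exact sub_left_inj.1 h4
  · set E := fun b : Lp ℝ p μ => b - P₁ b with hE
    have hEd : ∀ b b' : Lp ℝ p μ, E b - E b' = (b - b') - (P₁ b - P₁ b') := by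
      intro b b'; simp only [hE]; abel
    have anti' : ∀ b b' : Lp ℝ p μ, ‖b - b'‖ ≤ (1 + Λ) * ‖E b - E b'‖ := by
      intro b b'
      have h2 := est2 b b'
      have h1 : ‖b - b'‖ ≤ ‖(b - b') - (P₁ b - P₁ b')‖ + ‖P₁ b - P₁ b'‖ := by
        calc ‖b - b'‖ = ‖((b - b') - (P₁ b - P₁ b')) + (P₁ b - P₁ b')‖ := by
              rw [sub_add_cancel]
          _ ≤ _ := norm_add_le _ _
      rw [← hEd b b'] at h1 h2
      calc ‖b - b'‖ ≤ ‖E b - E b'‖ + Λ * ‖E b - E b'‖ := by linarith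
        _ = (1 + Λ) * ‖E b - E b'‖ := by ring
    have hΛ1 : (0:ℝ) < 1 - Λ := by linarith
    have lipP : ∀ b b' : Lp ℝ p μ, ‖P₁ b - P₁ b'‖ ≤ Λ / (1 - Λ) * ‖b - b'‖ := by
      intro b b'
      have h2 := est2 b b'
      have h3 : ‖(b - b') - (P₁ b - P₁ b')‖ ≤ ‖b - b'‖ + ‖P₁ b - P₁ b'‖ := norm_sub_le _ _
      have h4 : ‖P₁ b - P₁ b'‖ ≤ Λ * ‖b - b'‖ + Λ * ‖P₁ b - P₁ b'‖ := by nlinarith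
      rw [div_mul_eq_mul_div, le_div_iff₀ hΛ1]
      nlinarith
    have lip' : ∀ b b' : Lp ℝ p μ, ‖E b - E b'‖ ≤ (1 + Λ / (1 - Λ)) * ‖b - b'‖ := by
      intro b b'
      have h1 : ‖E b - E b'‖ ≤ ‖b - b'‖ + ‖P₁ b - P₁ b'‖ := by
        rw [hEd b b']
        exact norm_sub_le _ _
      have h2 := lipP b b'
      nlinarith [norm_nonneg (b - b')]
    have hanti : AntilipschitzWith ⟨1 + Λ, by linarith⟩ E := by
      apply AntilipschitzWith.of_le_mul_dist
      intro b b'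
      rw [dist_eq_norm, dist_eq_norm]
      exact anti' b b'
    have hlip : LipschitzWith ⟨1 + Λ / (1 - Λ), by positivity⟩ E := by
      apply LipschitzWith.of_dist_le_mul
      intro b b'
      rw [dist_eq_norm, dist_eq_norm]
      exact lip' b b'
    exact hanti.isClosed_range hlip.uniformContinuous

end
end
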